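/- Let D : [0,∞) → ℝ be strictly convex, continuous, differentiable on (0,∞), with unique minimizer λ_best, D(0) = n, lim_{λ→∞} D(λ) = ∞, and suppose D(λ_best) < m < n for some real m. Then the equation m − D(λ) = C(λ), where C(λ) := −(λ/2)·D'(λ), has a unique solution on [0, λ_best]; and the equation D(λ) = m has a unique solution on [λ_best, ∞). -/

import Mathlib

open Set Filter Topology

private lemma deriv_cont_aux {D D' : ℝ → ℝ}
    (hconv : ConvexOn ℝ (Set.Ici 0) D)
    (hderiv : ∀ x > (0 : ℝ), HasDerivAt D (D' x) x)
    {x₀ : ℝ} (hx₀ : 0 < x₀) : ContinuousAt D' x₀ := by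
  have hs : Tendsto (slope D x₀) (𝓝[≠] x₀) (𝓝 (D' x₀)) :=
    hasDerivAt_iff_tendsto_slope.mp (hderiv x₀ hx₀)
  have hrefl : Tendsto (fun x => 2 * x - x₀) (𝓝[≠] x₀) (𝓝[≠] x₀) := by
    apply tendsto_nhdsWithin_of_tendsto_nhds_of_eventually_within
    · have h1 : Tendsto (fun x : ℝ => 2 * x - x₀) (𝓝 x₀) (𝓝 (2 * x₀ - x₀)) :=
        ((continuous_const.mul continuous_id).sub continuous_const).tendsto x₀
      have h2 : (2 : ℝ) * x₀ - x₀ = x₀ := by ring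
      rw [h2] at h1
      exact h1.mono_left nhdsWithin_le_nhds
    · filter_upwards [eventually_mem_nhdsWithin] with x hx
      simp only [mem_compl_iff, mem_singleton_iff] at *
      intro h; exact hx (by linarith)
  set B : ℝ → ℝ := fun x => 2 * slope D x₀ (2 * x - x₀) - slope D x₀ x with hBdef
  have hB : Tendsto B (𝓝[≠] x₀) (𝓝 (D' x₀)) := by
    have h2 := ((hs.comp hrefl).const_mul 2).sub hs
    have h3 : (2 : ℝ) * D' x₀ - D' x₀ = D' x₀ := by ring
    rw [h3] at h2
    exact h2
  have hev : ∀ᶠ x in 𝓝[≠] x₀,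
      min (slope D x₀ x) (B x) ≤ D' x ∧ D' x ≤ max (slope D x₀ x) (B x) := by
    have hIoo : ∀ᶠ x in 𝓝[≠] x₀, x ∈ Ioo (x₀ / 2) (2 * x₀) :=
      mem_nhdsWithin_of_mem_nhds (Ioo_mem_nhds (by linarith) (by linarith))
    filter_upwards [hIoo, eventually_mem_nhdsWithin] with x hx hne
    have hne' : x ≠ x₀ := hne
    have hx0 : 0 < x := lt_trans (by linarith) hx.1
    have hy0 : 0 < 2 * x - x₀ := by have := hx.1; linarith
    have hd1 : x - x₀ ≠ 0 := sub_ne_zero.mpr hne'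
    have hid : B x = slope D (2 * x - x₀) x := by
      have hd2 : (2 * x - x₀) - x₀ ≠ 0 := by intro h; apply hd1; linarith
      have hd3 : x - (2 * x - x₀) ≠ 0 := by intro h; apply hd1; linarith
      simp only [hBdef, slope_def_field]
      field_simp
      ring
    rcases lt_or_gt_of_ne hne' with hlt | hgt
    · -- x < x₀ : slope (2x-x₀) x ≤ D' x ≤ slope x x₀
      have hyx : 2 * x - x₀ < x := by linarith
      have hlow : slope D (2 * x - x₀) x ≤ D' x :=
        hconv.slope_le_of_hasDerivAt (le_of_lt hy0) (le_of_lt hx0) hyx (hderiv x hx0)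
      have hup : D' x ≤ slope D x x₀ :=
        hconv.le_slope_of_hasDerivAt (le_of_lt hx0) (le_of_lt hx₀) hlt (hderiv x hx0)
      rw [slope_comm] at hup
      constructor
      · exact le_trans (min_le_right _ _) (hid ▸ hlow)
      · exact le_trans hup (le_max_left _ _)
    · -- x₀ < x : slope x₀ x ≤ D' x ≤ slope x (2x-x₀)
      have hyx : x < 2 * x - x₀ := by linarith
      have hlow : slope D x₀ x ≤ D' x :=
        hconv.slope_le_of_hasDerivAt (le_of_lt hx₀) (le_of_lt hx0) hgt (hderiv x hx0)
      have hup : D' x ≤ slope D x (2 * x - x₀) :=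
        hconv.le_slope_of_hasDerivAt (le_of_lt hx0) (le_of_lt hy0) hyx (hderiv x hx0)
      rw [slope_comm] at hup
      constructor
      · exact le_trans (min_le_left _ _) hlow
      · exact le_trans hup (hid ▸ le_max_right _ _)
  have hmin' : Tendsto (fun x => min (slope D x₀ x) (B x)) (𝓝[≠] x₀) (𝓝 (D' x₀)) := by
    have := hs.min hB; simpa using this
  have hmax' : Tendsto (fun x => max (slope D x₀ x) (B x)) (𝓝[≠] x₀) (𝓝 (D' x₀)) := by
    have := hs.max hB; simpa using this
  have hpunc : Tendsto D' (𝓝[≠] x₀) (𝓝 (D' x₀)) :=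
    tendsto_of_tendsto_of_tendsto_of_le_of_le' hmin' hmax'
      (hev.mono fun x h => h.1) (hev.mono fun x h => h.2)
  rw [ContinuousAt, ← nhdsNE_sup_pure, tendsto_sup]
  exact ⟨hpunc, tendsto_pure_nhds D' x₀⟩

theorem stmt17 (D D' : ℝ → ℝ) (n m : ℝ) (lb : ℝ)
    (hconv : StrictConvexOn ℝ (Set.Ici 0) D)
    (hcont : ContinuousOn D (Set.Ici 0))
    (hderiv : ∀ x > (0 : ℝ), HasDerivAt D (D' x) x)
    (hlb : 0 ≤ lb)
    (hmin : ∀ x ∈ Set.Ici (0 : ℝ), D lb ≤ D x)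
    (huniq : ∀ x ∈ Set.Ici (0 : ℝ), D x = D lb → x = lb)
    (hD0 : D 0 = n)
    (htop : Filter.Tendsto D Filter.atTop Filter.atTop)
    (hm1 : D lb < m) (hm2 : m < n) :
    (∃! l : ℝ, l ∈ Set.Icc 0 lb ∧ m - D l = -(l / 2) * D' l) ∧
    (∃! l : ℝ, l ∈ Set.Ici lb ∧ D l = m) := by
  have hcv : ConvexOn ℝ (Set.Ici 0) D := hconv.convexOn
  have hlb0 : 0 < lb := by
    rcases eq_or_lt_of_le hlb with h | h
    · exfalso; rw [← h] at hm1; rw [hD0] at hm1; linarith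
    · exact h
  have hD'lb : D' lb = 0 := by
    have hloc : IsLocalMin D lb := by
      filter_upwards [Ici_mem_nhds hlb0] with x hx using hmin x hx
    exact hloc.hasDerivAt_eq_zero (hderiv lb hlb0)
  -- D' x ≤ 0 on (0, lb]
  have hD'le : ∀ x, 0 < x → x ≤ lb → D' x ≤ 0 := by
    intro x hx0 hxlb
    rcases eq_or_lt_of_le hxlb with rfl | hxlt
    · exact le_of_eq hD'lb
    · have h1 : D' x ≤ slope D x lb :=
        hcv.le_slope_of_hasDerivAt (le_of_lt hx0) hlb hxlt (hderiv x hx0)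
      have h2 : slope D x lb ≤ 0 := by
        rw [slope_def_field]
        apply div_nonpos_of_nonpos_of_nonneg
        · have := hmin x (le_of_lt hx0); linarith
        · linarith
      linarith
  -- D' monotone on (0, ∞)
  have hmono : ∀ a b : ℝ, 0 < a → a < b → D' a ≤ D' b := by
    intro a b ha hab
    have hb : 0 < b := lt_trans ha hab
    have h1 : D' a ≤ slope D a b :=
      hcv.le_slope_of_hasDerivAt (le_of_lt ha) (le_of_lt hb) hab (hderiv a ha)
    have h2 : slope D a b ≤ D' b :=
      hcv.slope_le_of_hasDerivAt (le_of_lt ha) (le_of_lt hb) hab (hderiv b hb)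
    linarith
  set G : ℝ → ℝ := fun x => D x - x / 2 * D' x with hGdef
  -- G strictly decreasing on [0, lb]
  have hG : ∀ a b : ℝ, 0 ≤ a → a < b → b ≤ lb → G b < G a := by
    intro a b ha hab hblb
    have hb0 : 0 < b := lt_of_le_of_lt ha hab
    have hkey : D b - D a < (b - a) * D' b := by
      have h := hconv.slope_lt_of_hasDerivAt ha (le_of_lt hb0) hab (hderiv b hb0)
      rw [slope_def_field, div_lt_iff₀ (by linarith)] at h
      linarith [h]
    have hDb' : D' b ≤ 0 := hD'le b hb0 hblb
    simp only [hGdef]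
    rcases eq_or_lt_of_le ha with rfl | ha0
    · nlinarith
    · have hDa' : D' a ≤ 0 := hD'le a ha0 (le_of_lt (lt_of_lt_of_le hab hblb))
      have hm' : D' a ≤ D' b := hmono a b ha0 hab
      rcases le_or_gt a (b / 2) with hc | hc
      · nlinarith [mul_nonneg (by linarith : (0:ℝ) ≤ b / 2 - a) (neg_nonneg.2 hDb'),
          mul_nonneg (by linarith : (0:ℝ) ≤ a / 2) (neg_nonneg.2 hDa')]
      · nlinarith [mul_nonneg (by linarith : (0:ℝ) ≤ a - b / 2) (by linarith : (0:ℝ) ≤ D' b - D' a),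
          mul_nonneg (by linarith : (0:ℝ) ≤ (b - a) / 2) (neg_nonneg.2 hDa')]
  -- continuity of G on [0, lb]
  have hcontG : ContinuousOn G (Icc 0 lb) := by
    have hsub : Icc (0:ℝ) lb ⊆ Ici 0 := fun x hx => hx.1
    apply (hcont.mono hsub).sub
    intro x hx
    rcases eq_or_lt_of_le hx.1 with rfl | hx0
    · -- continuity at 0 within, via squeeze
      have hval : (0 : ℝ) / 2 * D' 0 = 0 := by ring
      have hlow : Tendsto (fun x => (D x - D 0) / 2) (𝓝[Icc 0 lb] 0) (𝓝 0) := by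
        have h1 : Tendsto D (𝓝[Icc 0 lb] 0) (𝓝 (D 0)) :=
          (hcont.mono hsub) 0 (left_mem_Icc.2 hlb)
        have h2 : Tendsto (fun x => (D x - D 0) / 2) (𝓝[Icc 0 lb] 0) (𝓝 ((D 0 - D 0) / 2)) :=
          (h1.sub tendsto_const_nhds).div_const 2
        simpa using h2
      have hbound : ∀ x ∈ Icc (0:ℝ) lb, (D x - D 0) / 2 ≤ x / 2 * D' x ∧ x / 2 * D' x ≤ 0 := by
        intro x hx'
        rcases eq_or_lt_of_le hx'.1 with rfl | hx0'
        · constructor <;> simp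
        · have h1 : slope D 0 x ≤ D' x :=
            hcv.slope_le_of_hasDerivAt (mem_Ici.2 le_rfl) (le_of_lt hx0') hx0' (hderiv x hx0')
          rw [slope_def_field, sub_zero, div_le_iff₀ hx0'] at h1
          constructor
          · nlinarith
          · have := hD'le x hx0' hx'.2
            nlinarith
      have hsq : Tendsto (fun x => x / 2 * D' x) (𝓝[Icc 0 lb] 0) (𝓝 0) := by
        apply tendsto_of_tendsto_of_tendsto_of_le_of_le' hlow tendsto_const_nhds
        · filter_upwards [eventually_mem_nhdsWithin] with x hx' using (hbound x hx').1
        · filter_upwards [eventually_mem_nhdsWithin] with x hx' using (hbound x hx').2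
      rw [ContinuousWithinAt, hval]
      exact hsq
    · exact (((continuous_id.div_const 2).continuousAt).mul
        (deriv_cont_aux hcv hderiv hx0)).continuousWithinAt
  have hG0 : G 0 = n := by simp [hGdef, hD0]
  have hGlb : G lb = D lb := by simp [hGdef, hD'lb]
  constructor
  · -- first claim
    have hivt : m ∈ G '' Icc 0 lb := by
      apply intermediate_value_Icc' hlb hcontG
      rw [hG0, hGlb]
      exact ⟨le_of_lt hm1, le_of_lt hm2⟩
    obtain ⟨l, hl, hGl⟩ := hivt
    refine ⟨l, ⟨hl, ?_⟩, ?_⟩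
    · have h1 : -(l / 2) * D' l = -(l / 2 * D' l) := by ring
      rw [h1]
      simp only [hGdef] at hGl
      linarith
    · intro y hy
      have hGy : G y = m := by
        have h1 : -(y / 2) * D' y = -(y / 2 * D' y) := by ring
        rw [h1] at hy
        simp only [hGdef]
        linarith [hy.2]
      rcases lt_trichotomy y l with h | h | h
      · have := hG y l hy.1.1 h hl.2; rw [hGy, hGl] at this; linarith
      · exact h
      · have := hG l y hl.1 h hy.1.2; rw [hGy, hGl] at this; linarith
  · -- second claim
    have hmono2 : StrictMonoOn D (Ici lb) := by
      intro a ha b hb hab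
      have ha0 : 0 < a := lt_of_lt_of_le hlb0 ha
      have hD'a : 0 ≤ D' a := by
        rcases eq_or_lt_of_le (mem_Ici.mp ha) with rfl | hlt
        · exact le_of_eq hD'lb.symm
        · have h1 : slope D lb a ≤ D' a :=
            hcv.slope_le_of_hasDerivAt hlb (le_of_lt ha0) hlt (hderiv a ha0)
          have h2 : 0 ≤ slope D lb a := by
            rw [slope_def_field]
            apply div_nonneg
            · have := hmin a (le_of_lt ha0); linarith
            · linarith
          linarith
      have h := hconv.lt_slope_of_hasDerivAt (by linarith : (0:ℝ) ≤ a)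
        (by linarith : (0:ℝ) ≤ b) hab (hderiv a ha0)
      rw [slope_def_field, lt_div_iff₀ (by linarith)] at h
      nlinarith
    obtain ⟨M, hMm, hMlb⟩ := ((htop.eventually_ge_atTop m).and (eventually_ge_atTop lb)).exists
    have hivt : m ∈ D '' Icc lb M := by
      apply intermediate_value_Icc hMlb (hcont.mono (fun x hx => le_trans hlb hx.1))
      exact ⟨le_of_lt hm1, hMm⟩
    obtain ⟨l, hl, hDl⟩ := hivt
    refine ⟨l, ⟨hl.1, hDl⟩, ?_⟩
    intro y hy
    exact hmono2.injOn hy.1 hl.1 (by rw [hy.2, hDl])
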